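/- Let 𝒜 be a unital prime ∗-algebra over ℂ with a nontrivial projection P₁, and set P₂ = 1 − P₁. Let Φ: 𝒜 → 𝒜 be a map satisfying Φ(A ⋄ B ⋄ C) = Φ(A) ⋄ B ⋄ C + A ⋄ Φ(B) ⋄ C + A ⋄ B ⋄ Φ(C) for all A, B, C ∈ 𝒜. Then for each i ∈ {1,2} and every A, B ∈ Pᵢ𝒜Pᵢ, one has Φ(A + B) = Φ(A) + Φ(B). -/

import Mathlib

/-- The ∗-Jordan product `A ⋄ B = AB + BA*`. -/
def sJordan {A : Type*} [Ring A] [StarRing A] (x y : A) : A :=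
  x * y + y * star x

/-- The triple product `A ⋄ B ⋄ C = (A ⋄ B) ⋄ C`. -/
def sJordanTriple {A : Type*} [Ring A] [StarRing A] (x y z : A) : A :=
  sJordan (sJordan x y) z

set_option linter.unusedSectionVars false
set_option maxHeartbeats 1000000

namespace StmtAux

variable {A : Type*} [Ring A] [Algebra ℂ A] [StarRing A] [StarModule ℂ A]

/- ... assume base lemmas from before (will merge) ... -/
lemma sJ_add1 (x y b : A) : sJordan (x + y) b = sJordan x b + sJordan y b := by
  simp only [sJordan, star_add, add_mul, mul_add]; abel
lemma sJ_add2 (x y z : A) : sJordan x (y + z) = sJordan x y + sJordan x z := by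
  simp only [sJordan, mul_add, add_mul]; abel
lemma jt_add1 (x y b c : A) :
    sJordanTriple (x + y) b c = sJordanTriple x b c + sJordanTriple y b c := by
  simp only [sJordanTriple, sJ_add1]
lemma jt_add2 (x y z c : A) :
    sJordanTriple x (y + z) c = sJordanTriple x y c + sJordanTriple x z c := by
  simp only [sJordanTriple, sJ_add2, sJ_add1]
lemma jt_add3 (x b y z : A) :
    sJordanTriple x b (y + z) = sJordanTriple x b y + sJordanTriple x b z := by
  simp only [sJordanTriple, sJ_add2]
lemma jt_sub1 (u v b c : A) :
    sJordanTriple (u - v) b c = sJordanTriple u b c - sJordanTriple v b c := by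
  rw [eq_sub_iff_add_eq, ← jt_add1, sub_add_cancel]
lemma jt_sub2 (x u v c : A) :
    sJordanTriple x (u - v) c = sJordanTriple x u c - sJordanTriple x v c := by
  rw [eq_sub_iff_add_eq, ← jt_add2, sub_add_cancel]
lemma jt_sub3 (x b u v : A) :
    sJordanTriple x b (u - v) = sJordanTriple x b u - sJordanTriple x b v := by
  rw [eq_sub_iff_add_eq, ← jt_add3, sub_add_cancel]
lemma star_half : star ((2:ℂ)⁻¹) = (2:ℂ)⁻¹ := by simp
lemma sJ_half (y : A) : sJordan ((2:ℂ)⁻¹ • (1:A)) y = y := by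
  rw [sJordan, star_smul, star_one, star_half, smul_mul_assoc, mul_smul_comm,
    one_mul, mul_one, ← add_smul]
  norm_num
lemma jt_half (y z : A) : sJordanTriple ((2:ℂ)⁻¹ • (1:A)) y z = sJordan y z := by
  rw [sJordanTriple, sJ_half]
lemma jt_h1 (z : A) : sJordanTriple z ((2:ℂ)⁻¹ • (1:A)) 1 = z + star z := by
  simp only [sJordanTriple, sJordan, mul_smul_comm, smul_mul_assoc, mul_one, one_mul,
    star_add, star_smul, star_one, star_half, star_star]
  module

/-- General expansion of `T Z w w` for self-adjoint `w`. -/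
lemma jt_ww (w Z : A) (hw : star w = w) :
    sJordanTriple Z w w = Z*(w*w) + w*(star Z*w) + w*(w*star Z) + w*(Z*w) := by
  simp only [sJordanTriple, sJordan, hw, star_add, star_mul, star_star, mul_add,
    add_mul, mul_assoc]
  abel

lemma sJ_zero1 (x : A) : sJordan 0 x = 0 := by simp [sJordan]

lemma corner_facts {p q u : A} (hp2 : p*p = p) (hq2 : q*q = q)
    (hqp : q*p = 0) (hu : u = p*u*q) :
    p*u = u ∧ u*q = u ∧ u*p = 0 ∧ q*u = 0 := by
  refine ⟨?_, ?_, ?_, ?_⟩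
  · rw [hu]; simp only [← mul_assoc, hp2]
  · rw [hu]; simp only [mul_assoc, hq2]
  · rw [hu]; simp only [mul_assoc, hqp, mul_zero]
  · rw [hu]; simp only [← mul_assoc, hqp, zero_mul]

lemma star_corner {p q u : A} (hps : star p = p) (hqs : star q = q)
    (h1 : p*u = u) (h2 : u*q = u) (h3 : u*p = 0) (h4 : q*u = 0) :
    star u * p = star u ∧ q * star u = star u ∧ p * star u = 0 ∧ star u * q = 0 := by
  refine ⟨?_, ?_, ?_, ?_⟩
  · rw [← hps, ← star_mul, h1]
  · rw [← hqs, ← star_mul, h2]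
  · rw [← hps, ← star_mul, h3, star_zero]
  · rw [← hqs, ← star_mul, h4, star_zero]

lemma eq_zero_of_self_eq_add {x : A} (h : x = x + x) : x = 0 :=
  right_eq_add.mp h

lemma double_eq_zero {v : A} (h : v + v = 0) : v = 0 := by
  have h2 : (2:ℂ) • v = 0 := by rw [two_smul]; exact h
  rcases smul_eq_zero.mp h2 with h3 | h3
  · norm_num at h3
  · exact h3

variable (Φ : A → A)
  (hΦ : ∀ a b c : A, Φ (sJordanTriple a b c) =
      sJordanTriple (Φ a) b c + sJordanTriple a (Φ b) c + sJordanTriple a b (Φ c))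

include hΦ

lemma phi_zero : Φ 0 = 0 := by
  simpa [sJordanTriple, sJordan] using hΦ 0 0 0

lemma rule1 (x y b c : A) :
    Φ (sJordanTriple (x + y) b c) = Φ (sJordanTriple x b c) + Φ (sJordanTriple y b c)
      + sJordanTriple (Φ (x + y) - Φ x - Φ y) b c := by
  rw [hΦ, hΦ, hΦ, jt_sub1, jt_sub1, jt_add1 x y (Φ b) c, jt_add1 x y b (Φ c)]
  abel

lemma rule2 (w x y c : A) :
    Φ (sJordanTriple w (x + y) c) = Φ (sJordanTriple w x c) + Φ (sJordanTriple w y c)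
      + sJordanTriple w (Φ (x + y) - Φ x - Φ y) c := by
  rw [hΦ, hΦ, hΦ, jt_sub2, jt_sub2, jt_add2 (Φ w) x y c, jt_add2 w x y (Φ c)]
  abel

lemma rule3 (w b x y : A) :
    Φ (sJordanTriple w b (x + y)) = Φ (sJordanTriple w b x) + Φ (sJordanTriple w b y)
      + sJordanTriple w b (Φ (x + y) - Φ x - Φ y) := by
  rw [hΦ, hΦ, hΦ, jt_sub3, jt_sub3, jt_add3 (Φ w) b x y, jt_add3 w (Φ b) x y]
  abel

/-- Lemma A : additivity on `pAq + qAp`. -/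
lemma lemA (p q : A) (hps : star p = p) (hqs : star q = q)
    (hp2 : p*p = p) (hq2 : q*q = q) (hpq : p*q = 0) (hqp : q*p = 0) (hpq1 : p + q = 1)
    (U W : A) (hU : U = p*U*q) (hW : W = q*W*p) :
    Φ (U + W) = Φ U + Φ W := by
  obtain ⟨hpU, hUq, hUp, hqU⟩ := corner_facts hp2 hq2 hqp hU
  obtain ⟨hsU1, hsU2, hsU3, hsU4⟩ := star_corner hps hqs hpU hUq hUp hqU
  obtain ⟨hqW, hWp, hWq, hpW⟩ := corner_facts hq2 hp2 hpq hW
  obtain ⟨hsW1, hsW2, hsW3, hsW4⟩ := star_corner hqs hps hqW hWp hWq hpW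
  have hpp : ∀ z : A, p*(p*z) = p*z := fun z => by rw [← mul_assoc, hp2]
  have hqq : ∀ z : A, q*(q*z) = q*z := fun z => by rw [← mul_assoc, hq2]
  have hpq' : ∀ z : A, p*(q*z) = 0 := fun z => by rw [← mul_assoc, hpq, zero_mul]
  have hqp' : ∀ z : A, q*(p*z) = 0 := fun z => by rw [← mul_assoc, hqp, zero_mul]
  obtain ⟨D, hDdef⟩ : ∃ D, D = Φ (U + W) - Φ U - Φ W := ⟨_, rfl⟩
  -- K1 : D = p*D + D*p
  have hvalU : p*U + U*p = U := by rw [hpU, hUp, add_zero]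
  have hvalW : p*W + W*p = W := by rw [hpW, hWp, zero_add]
  have hvalUW : p*(U+W) + (U+W)*p = U + W := by
    rw [mul_add, add_mul, hpU, hUp, hpW, hWp]; abel
  have hvalh : ∀ Z : A, sJordanTriple ((2:ℂ)⁻¹ • (1:A)) p Z = p*Z + Z*p := by
    intro Z; rw [jt_half, sJordan, hps]
  have e1 := rule3 Φ hΦ ((2:ℂ)⁻¹ • (1:A)) p U W
  rw [hvalh, hvalh, hvalh, hvalh, hvalU, hvalW, hvalUW, ← hDdef] at e1
  -- e1 : Φ (U+W) = Φ U + Φ W + (p*D + D*p)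
  have hK1 : D = p*D + D*p := by nth_rewrite 1 [hDdef]; rw [e1]; abel
  have hpDp : p*(D*p) = 0 := by
    have e2 := congrArg (fun z => p*(z*p)) hK1
    simp only [mul_add, add_mul, mul_assoc, hpp, hqq, hpq', hqp', hp2, hq2, hpq, hqp,
      mul_zero, zero_mul, add_zero, zero_add] at e2
    exact eq_zero_of_self_eq_add e2
  have hqDq : q*(D*q) = 0 := by
    have e2 := congrArg (fun z => q*(z*q)) hK1
    simp only [mul_add, add_mul, mul_assoc, hpp, hqq, hpq', hqp', hp2, hq2, hpq, hqp,
      mul_zero, zero_mul, add_zero, zero_add] at e2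
    exact e2
  -- K2 : T(D,q,q) = 0  ⟹  p*(D*q) = 0
  have vUqq : sJordanTriple U q q = U + star U := by
    rw [jt_ww q U hqs]
    simp only [hq2, hUq, hsU4, hsU2, hqU, mul_zero, zero_add, add_zero]
  have vWqq : sJordanTriple W q q = 0 := by
    rw [jt_ww q W hqs]
    simp only [hq2, hWq, hsW1, hsW3, hqW, mul_zero, zero_mul, add_zero, zero_add]
  have vUWqq : sJordanTriple (U + W) q q = U + star U := by
    rw [jt_add1, vUqq, vWqq, add_zero]
  have e3 := rule1 Φ hΦ U W q q
  rw [vUqq, vWqq, vUWqq, phi_zero Φ hΦ, add_zero, ← hDdef] at e3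
  have hK2 : sJordanTriple D q q = 0 := (left_eq_add.mp e3)
  have hpDq : p*(D*q) = 0 := by
    rw [jt_ww q D hqs] at hK2
    have e4 := congrArg (fun z => p*(z*q)) hK2
    simp only [mul_add, add_mul, mul_assoc, hpp, hqq, hpq', hqp', hp2, hq2, hpq, hqp,
      mul_zero, zero_mul, add_zero, zero_add] at e4
    exact e4
  -- K3 : T(D,p,p) = 0  ⟹  q*(D*p) = 0
  have vUpp : sJordanTriple U p p = 0 := by
    rw [jt_ww p U hps]
    simp only [hp2, hUp, hsU1, hsU3, hpU, mul_zero, zero_mul, add_zero, zero_add]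
  have vWpp : sJordanTriple W p p = W + star W := by
    rw [jt_ww p W hps]
    simp only [hp2, hWp, hsW2, hsW4, hpW, mul_zero, zero_mul, zero_add, add_zero]
  have vUWpp : sJordanTriple (U + W) p p = W + star W := by
    rw [jt_add1, vUpp, vWpp, zero_add]
  have e5 := rule1 Φ hΦ U W p p
  rw [vUpp, vWpp, vUWpp, phi_zero Φ hΦ, zero_add, ← hDdef] at e5
  have hK3 : sJordanTriple D p p = 0 := (left_eq_add.mp e5)
  have hqDp : q*(D*p) = 0 := by
    rw [jt_ww p D hps] at hK3
    have e6 := congrArg (fun z => q*(z*p)) hK3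
    simp only [mul_add, add_mul, mul_assoc, hpp, hqq, hpq', hqp', hp2, hq2, hpq, hqp,
      mul_zero, zero_mul, add_zero, zero_add] at e6
    exact e6
  -- reconstruct
  have hD0 : D = 0 := by
    have hrec : D = (p + q) * (D * (p + q)) := by rw [hpq1, mul_one, one_mul]
    simp only [mul_add, add_mul, hpDp, hpDq, hqDp, hqDq, add_zero, zero_add] at hrec
    exact hrec
  have := hD0
  rw [hDdef] at this
  rw [sub_sub, sub_eq_zero] at this
  rw [this]

/-- Lemma B : additivity on pairs in `pAq`. -/
lemma lemB (p q : A) (hps : star p = p) (hqs : star q = q)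
    (hp2 : p*p = p) (hq2 : q*q = q) (hpq : p*q = 0) (hqp : q*p = 0) (hpq1 : p + q = 1)
    (U V : A) (hU : U = p*U*q) (hV : V = p*V*q) :
    Φ (U + V) = Φ U + Φ V := by
  obtain ⟨hpU, hUq, hUp, hqU⟩ := corner_facts hp2 hq2 hqp hU
  obtain ⟨hsU1, hsU2, hsU3, hsU4⟩ := star_corner hps hqs hpU hUq hUp hqU
  obtain ⟨hpV, hVq, hVp, hqV⟩ := corner_facts hp2 hq2 hqp hV
  obtain ⟨hsV1, hsV2, hsV3, hsV4⟩ := star_corner hps hqs hpV hVq hVp hqV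
  have hpp : ∀ z : A, p*(p*z) = p*z := fun z => by rw [← mul_assoc, hp2]
  have hqq : ∀ z : A, q*(q*z) = q*z := fun z => by rw [← mul_assoc, hq2]
  have hpq' : ∀ z : A, p*(q*z) = 0 := fun z => by rw [← mul_assoc, hpq, zero_mul]
  have hqp' : ∀ z : A, q*(p*z) = 0 := fun z => by rw [← mul_assoc, hqp, zero_mul]
  obtain ⟨D, hDdef⟩ : ∃ D, D = Φ (U + V) - Φ U - Φ V := ⟨_, rfl⟩
  -- K1 : D = p*D + D*p
  have hvalU : p*U + U*p = U := by rw [hpU, hUp, add_zero]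
  have hvalV : p*V + V*p = V := by rw [hpV, hVp, add_zero]
  have hvalUV : p*(U+V) + (U+V)*p = U + V := by
    rw [mul_add, add_mul, hpU, hUp, hpV, hVp]; abel
  have hvalh : ∀ Z : A, sJordanTriple ((2:ℂ)⁻¹ • (1:A)) p Z = p*Z + Z*p := by
    intro Z; rw [jt_half, sJordan, hps]
  have e1 := rule3 Φ hΦ ((2:ℂ)⁻¹ • (1:A)) p U V
  rw [hvalh, hvalh, hvalh, hvalh, hvalU, hvalV, hvalUV, ← hDdef] at e1
  have hK1 : D = p*D + D*p := by nth_rewrite 1 [hDdef]; rw [e1]; abel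
  have hpDp : p*(D*p) = 0 := by
    have e2 := congrArg (fun z => p*(z*p)) hK1
    simp only [mul_add, add_mul, mul_assoc, hpp, hqq, hpq', hqp', hp2, hq2, hpq, hqp,
      mul_zero, zero_mul, add_zero, zero_add] at e2
    exact eq_zero_of_self_eq_add e2
  have hqDq : q*(D*q) = 0 := by
    have e2 := congrArg (fun z => q*(z*q)) hK1
    simp only [mul_add, add_mul, mul_assoc, hpp, hqq, hpq', hqp', hp2, hq2, hpq, hqp,
      mul_zero, zero_mul, add_zero, zero_add] at e2
    exact e2
  -- K3 : T(D,p,p) = 0  ⟹  q*(D*p) = 0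
  have vUpp : sJordanTriple U p p = 0 := by
    rw [jt_ww p U hps]
    simp only [hp2, hUp, hsU1, hsU3, hpU, mul_zero, zero_mul, add_zero, zero_add]
  have vVpp : sJordanTriple V p p = 0 := by
    rw [jt_ww p V hps]
    simp only [hp2, hVp, hsV1, hsV3, hpV, mul_zero, zero_mul, add_zero, zero_add]
  have vUVpp : sJordanTriple (U + V) p p = 0 := by
    rw [jt_add1, vUpp, vVpp, add_zero]
  have e5 := rule1 Φ hΦ U V p p
  rw [vUpp, vVpp, vUVpp, phi_zero Φ hΦ, zero_add, zero_add, ← hDdef] at e5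
  have hK3 : sJordanTriple D p p = 0 := e5.symm
  have hqDp : q*(D*p) = 0 := by
    rw [jt_ww p D hps] at hK3
    have e6 := congrArg (fun z => q*(z*p)) hK3
    simp only [mul_add, add_mul, mul_assoc, hpp, hqq, hpq', hqp', hp2, hq2, hpq, hqp,
      mul_zero, zero_mul, add_zero, zero_add] at e6
    exact e6
  -- D lives in the corner pAq
  have hD : D = p*(D*q) := by
    have hrec : D = (p + q) * (D * (p + q)) := by rw [hpq1, mul_one, one_mul]
    simp only [mul_add, add_mul, hpDp, hqDp, hqDq, add_zero, zero_add] at hrec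
    exact hrec
  have hD' : D = p*D*q := by
    conv_lhs => rw [hD]
    rw [mul_assoc]
  obtain ⟨hpD, hDq, hDp, hqD⟩ := corner_facts hp2 hq2 hqp hD'
  obtain ⟨hsD1, hsD2, hsD3, hsD4⟩ := star_corner hps hqs hpD hDq hDp hqD
  -- key step using Lemma A on (U, star V)
  have hsV : star V = q*(star V)*p := by
    conv_lhs => rw [hV]
    simp only [star_mul, hps, hqs, mul_assoc]
  have hA := lemA Φ hΦ p q hps hqs hp2 hq2 hpq hqp hpq1 U (star V) hU hsV
  have e7 := rule1 Φ hΦ U (star V) ((2:ℂ)⁻¹ • (1:A)) 1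
  rw [jt_h1, jt_h1, jt_h1] at e7
  have hz : Φ (U + star V) - Φ U - Φ (star V) = 0 := by rw [hA]; abel
  rw [hz] at e7
  have n0 : (0:A) + star (0:A) = 0 := by simp
  rw [jt_h1, n0, add_zero] at e7
  have n1 : U + star V + star (U + star V) = U + star U + (V + star V) := by
    rw [star_add, star_star]; abel
  have n2 : star V + star (star V) = V + star V := by rw [star_star]; abel
  rw [n1, n2] at e7
  -- e7 : Φ (U + star U + (V + star V)) = Φ (U + star U) + Φ (V + star V)
  have e8 := rule1 Φ hΦ U V ((2:ℂ)⁻¹ • (1:A)) 1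
  rw [jt_h1, jt_h1, jt_h1, ← hDdef] at e8
  have n3 : U + V + star (U + V) = U + star U + (V + star V) := by
    rw [star_add]; abel
  rw [n3, e7] at e8
  have hsk : sJordanTriple D ((2:ℂ)⁻¹ • (1:A)) 1 = 0 := left_eq_add.mp e8
  rw [jt_h1] at hsk
  -- finish : D ∈ pAq and D + D* = 0 imply D = 0
  have e9 := congrArg (fun z => z*q) hsk
  simp only [add_mul, hDq, hsD4, add_zero, zero_mul] at e9
  rw [hDdef] at e9
  rw [sub_sub, sub_eq_zero] at e9
  rw [e9]

/-- Diagonal lemma : additivity on pairs in `pAp`. -/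
lemma lemDiag (hprime : ∀ a b : A, (∀ x : A, a * x * b = 0) → a = 0 ∨ b = 0)
    (p q : A) (hps : star p = p) (hqs : star q = q)
    (hp2 : p*p = p) (hq2 : q*q = q) (hpq : p*q = 0) (hqp : q*p = 0) (hpq1 : p + q = 1)
    (hp0 : p ≠ 0) (hq0 : q ≠ 0)
    (a b : A) (ha : a = p*a*p) (hb : b = p*b*p) :
    Φ (a + b) = Φ a + Φ b := by
  have hpp : ∀ z : A, p*(p*z) = p*z := fun z => by rw [← mul_assoc, hp2]
  have hqq : ∀ z : A, q*(q*z) = q*z := fun z => by rw [← mul_assoc, hq2]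
  have hpq' : ∀ z : A, p*(q*z) = 0 := fun z => by rw [← mul_assoc, hpq, zero_mul]
  have hqp' : ∀ z : A, q*(p*z) = 0 := fun z => by rw [← mul_assoc, hqp, zero_mul]
  -- corner facts for a and b
  have hpa : p*a = a := by rw [ha]; simp only [← mul_assoc, hp2]
  have hap : a*p = a := by rw [ha]; simp only [mul_assoc, hp2]
  have hqa : q*a = 0 := by rw [← hpa, ← mul_assoc, hqp, zero_mul]
  have haq : a*q = 0 := by rw [← hap, mul_assoc, hpq, mul_zero]
  have hsaq : q*star a = 0 := by rw [← hqs, ← star_mul, haq, star_zero]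
  have hpb : p*b = b := by rw [hb]; simp only [← mul_assoc, hp2]
  have hbp : b*p = b := by rw [hb]; simp only [mul_assoc, hp2]
  have hqb : q*b = 0 := by rw [← hpb, ← mul_assoc, hqp, zero_mul]
  have hbq : b*q = 0 := by rw [← hbp, mul_assoc, hpq, mul_zero]
  have hsbq : q*star b = 0 := by rw [← hqs, ← star_mul, hbq, star_zero]
  obtain ⟨D, hDdef⟩ : ∃ D, D = Φ (a + b) - Φ a - Φ b := ⟨_, rfl⟩
  -- Step 1 : T(q, D, X) = 0 for all X
  have hJqa : sJordan q a = 0 := by rw [sJordan, hqs, hqa, haq, add_zero]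
  have hJqb : sJordan q b = 0 := by rw [sJordan, hqs, hqb, hbq, add_zero]
  have v2a : ∀ X : A, sJordanTriple q a X = 0 := fun X => by
    rw [sJordanTriple, hJqa, sJ_zero1]
  have v2b : ∀ X : A, sJordanTriple q b X = 0 := fun X => by
    rw [sJordanTriple, hJqb, sJ_zero1]
  have v2ab : ∀ X : A, sJordanTriple q (a+b) X = 0 := fun X => by
    rw [jt_add2, v2a, v2b, add_zero]
  have hTq : ∀ X : A, sJordanTriple q D X = 0 := by
    intro X
    have e := rule2 Φ hΦ q a b X
    rw [v2a, v2b, v2ab, phi_zero Φ hΦ, zero_add, zero_add, ← hDdef] at e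
    exact e.symm
  have hJqD : sJordan q D = q*D + D*q := by rw [sJordan, hqs]
  have hsJqD : star (q*D + D*q) = star D*q + q*star D := by
    rw [star_add, star_mul, star_mul, hqs]
  have hWX : ∀ X : A, (q*D + D*q)*X + X*(star D*q + q*star D) = 0 := by
    intro X
    have e := hTq X
    rw [sJordanTriple, hJqD, sJordan, hsJqD] at e
    exact e
  have hW1 : (q*D + D*q) + (star D*q + q*star D) = 0 := by
    have e := hWX 1
    rwa [mul_one, one_mul] at e
  have hWs : star D*q + q*star D = -(q*D + D*q) :=
    eq_neg_of_add_eq_zero_right hW1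
  have hcomm : ∀ X : A, (q*D + D*q)*X = X*(q*D + D*q) := by
    intro X
    have e := hWX X
    rw [hWs, mul_neg, ← sub_eq_add_neg] at e
    exact sub_eq_zero.mp e
  have hqDc : q*D = D*q := by
    have e := hcomm q
    simp only [add_mul, mul_add, mul_assoc, hqq, hq2] at e
    -- e : q*(D*q) + D*q = q*D + q*(D*q)
    rw [add_comm (q*D) (q*(D*q))] at e
    exact (add_left_cancel e).symm
  have hWp0 : (q*D + D*q)*p = 0 := by
    rw [add_mul, hqDc, mul_assoc, hqp, mul_zero, add_zero]
  have hW0 : q*D + D*q = 0 := by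
    rcases hprime (q*D + D*q) p (fun x => by
      rw [hcomm x, mul_assoc, hWp0, mul_zero]) with h | h
    · exact h
    · exact absurd h hp0
  have hqD0 : q*D = 0 := by
    apply double_eq_zero
    rw [← hW0]; rw [hqDc]
  have hDq0 : D*q = 0 := by rw [← hqDc]; exact hqD0
  have hDp : D*p = D := by
    have : D*(p+q) = D := by rw [hpq1, mul_one]
    rw [mul_add, hDq0, add_zero] at this
    exact this
  have hpD : p*D = D := by
    have : (p+q)*D = D := by rw [hpq1, one_mul]
    rw [add_mul, hqD0, add_zero] at this
    exact this
  -- Step 2 : for Y = p*y*q,  T(p, D, Y) = 0, then primeness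
  have hDY : ∀ y : A, D*y*q = 0 := by
    intro y
    have hYq : (p*y*q)*q = p*y*q := by rw [mul_assoc, hq2]
    have hYsa : (p*y*q) * star a = 0 := by rw [mul_assoc, hsaq, mul_zero]
    have hYsb : (p*y*q) * star b = 0 := by rw [mul_assoc, hsbq, mul_zero]
    have hJpa : sJordan p a = a + a := by rw [sJordan, hps, hpa, hap]
    have hJpb : sJordan p b = b + b := by rw [sJordan, hps, hpb, hbp]
    have hJpab : sJordan p (a+b) = (a+b) + (a+b) := by
      rw [sJ_add2, hJpa, hJpb]; abel
    have va : sJordanTriple p a (p*y*q) = a*(p*y*q) + a*(p*y*q) := by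
      rw [sJordanTriple, hJpa, sJordan, star_add, add_mul, mul_add, hYsa, add_zero, add_zero]
    have vb : sJordanTriple p b (p*y*q) = b*(p*y*q) + b*(p*y*q) := by
      rw [sJordanTriple, hJpb, sJordan, star_add, add_mul, mul_add, hYsb, add_zero, add_zero]
    have hYsab : (p*y*q) * star (a+b) = 0 := by
      rw [star_add, mul_add, hYsa, hYsb, add_zero]
    have vab : sJordanTriple p (a+b) (p*y*q) = (a+b)*(p*y*q) + (a+b)*(p*y*q) := by
      rw [sJordanTriple, hJpab, sJordan, star_add, add_mul, mul_add, hYsab, add_zero, add_zero]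
    -- Lemma B split
    have hpaY : p*(a*(p*y*q)) = a*(p*y*q) := by rw [← mul_assoc, hpa]
    have haYq : (a*(p*y*q))*q = a*(p*y*q) := by rw [mul_assoc, hYq]
    have hpbY : p*(b*(p*y*q)) = b*(p*y*q) := by rw [← mul_assoc, hpb]
    have hbYq : (b*(p*y*q))*q = b*(p*y*q) := by rw [mul_assoc, hYq]
    have hUcor : a*(p*y*q) + a*(p*y*q) = p*(a*(p*y*q) + a*(p*y*q))*q := by
      rw [mul_add, add_mul, hpaY, haYq]
    have hVcor : b*(p*y*q) + b*(p*y*q) = p*(b*(p*y*q) + b*(p*y*q))*q := by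
      rw [mul_add, add_mul, hpbY, hbYq]
    have hsplit := lemB Φ hΦ p q hps hqs hp2 hq2 hpq hqp hpq1 _ _ hUcor hVcor
    have n4 : (a+b)*(p*y*q) + (a+b)*(p*y*q)
        = (a*(p*y*q) + a*(p*y*q)) + (b*(p*y*q) + b*(p*y*q)) := by
      rw [add_mul]; abel
    have e := rule2 Φ hΦ p a b (p*y*q)
    rw [va, vb, vab, n4, hsplit, ← hDdef] at e
    have hT : sJordanTriple p D (p*y*q) = 0 := left_eq_add.mp e
    -- expand T(p, D, Y)
    have hsDq : q * star D = 0 := by rw [← hqs, ← star_mul, hDq0, star_zero]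
    have hYsD : (p*y*q) * star D = 0 := by rw [mul_assoc, hsDq, mul_zero]
    have hJpD : sJordan p D = D + D := by rw [sJordan, hps, hpD, hDp]
    rw [sJordanTriple, hJpD, sJordan, star_add, add_mul, mul_add, hYsD, add_zero,
      add_zero] at hT
    have hDY0 : D*(p*y*q) = 0 := double_eq_zero hT
    rw [← mul_assoc, ← mul_assoc, hDp] at hDY0
    exact hDY0
  have hD0 : D = 0 := by
    rcases hprime D q hDY with h | h
    · exact h
    · exact absurd h hq0
  rw [hDdef, sub_sub, sub_eq_zero] at hD0
  rw [hD0]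

end StmtAux

theorem stmt7 {A : Type*} [Ring A] [Algebra ℂ A] [StarRing A] [StarModule ℂ A]
    (hprime : ∀ a b : A, (∀ x : A, a * x * b = 0) → a = 0 ∨ b = 0)
    (P₁ : A) (hsa : star P₁ = P₁) (hidem : P₁ * P₁ = P₁)
    (hP0 : P₁ ≠ 0) (hP1 : P₁ ≠ 1)
    (Φ : A → A)
    (hΦ : ∀ a b c : A, Φ (sJordanTriple a b c) =
      sJordanTriple (Φ a) b c + sJordanTriple a (Φ b) c + sJordanTriple a b (Φ c)) :
    ∀ P : A, (P = P₁ ∨ P = 1 - P₁) →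
      ∀ a b : A, a = P * a * P → b = P * b * P →
        Φ (a + b) = Φ a + Φ b := by
  have hsq : star (1 - P₁) = 1 - P₁ := by rw [star_sub, star_one, hsa]
  have hq2 : (1 - P₁) * (1 - P₁) = 1 - P₁ := by
    rw [sub_mul, one_mul, mul_sub, mul_one, hidem, sub_self, sub_zero]
  have hpq : P₁ * (1 - P₁) = 0 := by rw [mul_sub, mul_one, hidem, sub_self]
  have hqp : (1 - P₁) * P₁ = 0 := by rw [sub_mul, one_mul, hidem, sub_self]
  have hq0 : (1 : A) - P₁ ≠ 0 := sub_ne_zero_of_ne (Ne.symm hP1)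
  intro P hP a b ha hb
  rcases hP with rfl | rfl
  · exact StmtAux.lemDiag Φ hΦ hprime P (1 - P) hsa hsq hidem hq2 hpq hqp
      (by abel) hP0 hq0 a b ha hb
  · exact StmtAux.lemDiag Φ hΦ hprime (1 - P₁) P₁ hsq hsa hq2 hidem hqp hpq
      (by abel) hq0 hP0 a b ha hb
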